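/- Fix θ ∈ [0, π/2] and let v₊ = (cos(θ/2), sin(θ/2)) and v₋ = (-sin(θ/2), cos(θ/2)) be the unit eigenvectors of cos θ · σz + sin θ · σx in ℂ². Then for every unit vector ψ = (ψ₁, ψ₂) ∈ ℂ², one has max(|ψ₁|², |ψ₂|²) + max(|⟨v₊, ψ⟩|², |⟨v₋, ψ⟩|²) ≤ 1 + cos(θ/2). -/

import Mathlib

open Matrix

set_option maxHeartbeats 1000000

theorem stmt_3 (θ : ℝ) (hθ : θ ∈ Set.Icc 0 (Real.pi / 2))
    (vp vm : Fin 2 → ℂ)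
    (hvp : vp = ![(Real.cos (θ / 2) : ℂ), (Real.sin (θ / 2) : ℂ)])
    (hvm : vm = ![-(Real.sin (θ / 2) : ℂ), (Real.cos (θ / 2) : ℂ)])
    (ψ : Fin 2 → ℂ) (hψ : star ψ ⬝ᵥ ψ = 1) :
    max (‖ψ 0‖ ^ 2) (‖ψ 1‖ ^ 2) +
      max (‖star vp ⬝ᵥ ψ‖ ^ 2) (‖star vm ⬝ᵥ ψ‖ ^ 2) ≤
    1 + Real.cos (θ / 2) := by
  obtain ⟨hθ0, hθ1⟩ := hθ
  set c := Real.cos (θ / 2) with hc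
  set s := Real.sin (θ / 2) with hs
  set a := ‖ψ 0‖ with ha
  set b := ‖ψ 1‖ with hb
  have hs0 : 0 ≤ s := Real.sin_nonneg_of_nonneg_of_le_pi (by linarith)
    (by nlinarith [Real.pi_pos])
  have hc0 : 0 ≤ c := Real.cos_nonneg_of_mem_Icc
    ⟨by linarith [Real.pi_pos], by linarith [Real.pi_pos]⟩
  have hcs : s ^ 2 + c ^ 2 = 1 := Real.sin_sq_add_cos_sq _
  have hsc : s ≤ c := by
    have h1 : s = Real.cos (Real.pi / 2 - θ / 2) := (Real.cos_pi_div_two_sub _).symm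
    rw [h1]
    apply Real.cos_le_cos_of_nonneg_of_le_pi (by linarith) (by linarith [Real.pi_pos])
    linarith
  have ha0 : 0 ≤ a := norm_nonneg _
  have hb0 : 0 ≤ b := norm_nonneg _
  have hab : a ^ 2 + b ^ 2 = 1 := by
    have h := hψ
    simp only [dotProduct, Fin.sum_univ_two, Pi.star_apply, Complex.star_def] at h
    have h2 := congrArg Complex.re h
    simp only [Complex.add_re, Complex.mul_conj', Complex.one_re] at h2
    rw [← Complex.normSq_eq_conj_mul_self, ← Complex.normSq_eq_conj_mul_self] at h
    have h3 : ((Complex.normSq (ψ 0) + Complex.normSq (ψ 1) : ℝ) : ℂ) = 1 := by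
      push_cast; exact h
    have h4 : Complex.normSq (ψ 0) + Complex.normSq (ψ 1) = 1 := by
      exact_mod_cast h3
    rw [← Complex.sq_norm, ← Complex.sq_norm] at h4
    exact h4
  have hdotp : star vp ⬝ᵥ ψ = (c : ℂ) * ψ 0 + (s : ℂ) * ψ 1 := by
    subst hvp
    simp [dotProduct, Fin.sum_univ_two, Complex.star_def, Complex.conj_ofReal]
  have hdotm : star vm ⬝ᵥ ψ = -(s : ℂ) * ψ 0 + (c : ℂ) * ψ 1 := by
    subst hvm
    simp [dotProduct, Fin.sum_univ_two, Complex.star_def, Complex.conj_ofReal]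
  have hA : ‖star vp ⬝ᵥ ψ‖ ≤ c * a + s * b := by
    rw [hdotp]
    calc ‖(c : ℂ) * ψ 0 + (s : ℂ) * ψ 1‖
        ≤ ‖(c : ℂ) * ψ 0‖ + ‖(s : ℂ) * ψ 1‖ :=
          norm_add_le _ _
      _ = c * a + s * b := by
          simp [norm_mul, abs_of_nonneg hc0, abs_of_nonneg hs0, ha, hb]
  have hB : ‖star vm ⬝ᵥ ψ‖ ≤ s * a + c * b := by
    rw [hdotm]
    calc ‖-(s : ℂ) * ψ 0 + (c : ℂ) * ψ 1‖
        ≤ ‖-(s : ℂ) * ψ 0‖ + ‖(c : ℂ) * ψ 1‖ :=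
          norm_add_le _ _
      _ = s * a + c * b := by
          simp [norm_mul, abs_of_nonneg hc0, abs_of_nonneg hs0, ha, hb]
  have key : ∀ x y : ℝ, 0 ≤ x → 0 ≤ y → x ^ 2 + y ^ 2 = 1 → y ≤ x →
      x ^ 2 + (c * x + s * y) ^ 2 ≤ 1 + c := by
    intro x y hx hy hxy hyx
    have hid : (c * (x ^ 2 - y ^ 2) + 2 * s * (x * y)) ^ 2 +
        (s * (x ^ 2 - y ^ 2) - 2 * c * (x * y)) ^ 2 = (s ^ 2 + c ^ 2) * (x ^ 2 + y ^ 2) ^ 2 := by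
      ring
    rw [hcs, hxy] at hid
    have h1 : c * (x ^ 2 - y ^ 2) + 2 * s * (x * y) ≤ 1 := by
      nlinarith [sq_nonneg (s * (x ^ 2 - y ^ 2) - 2 * c * (x * y)),
        sq_nonneg (c * (x ^ 2 - y ^ 2) + 2 * s * (x * y) - 1)]
    nlinarith [mul_le_mul_of_nonneg_left h1 hc0]
  have hAsq : ‖star vp ⬝ᵥ ψ‖ ^ 2 ≤ (c * a + s * b) ^ 2 :=
    pow_le_pow_left₀ (norm_nonneg _) hA 2
  have hBsq : ‖star vm ⬝ᵥ ψ‖ ^ 2 ≤ (s * a + c * b) ^ 2 :=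
    pow_le_pow_left₀ (norm_nonneg _) hB 2
  rcases le_total b a with hba | hba
  · have hord : s * a + c * b ≤ c * a + s * b := by
      nlinarith [mul_nonneg (sub_nonneg.2 hsc) (sub_nonneg.2 hba)]
    have hord2 : (s * a + c * b) ^ 2 ≤ (c * a + s * b) ^ 2 :=
      pow_le_pow_left₀ (by positivity) hord 2
    have h1 : max (a ^ 2) (b ^ 2) = a ^ 2 := by
      exact max_eq_left (pow_le_pow_left₀ hb0 hba 2)
    rw [h1]
    have h2 : max (‖star vp ⬝ᵥ ψ‖ ^ 2) (‖star vm ⬝ᵥ ψ‖ ^ 2)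
        ≤ (c * a + s * b) ^ 2 := max_le hAsq (le_trans hBsq hord2)
    have := key a b ha0 hb0 hab hba
    linarith
  · have hord : c * a + s * b ≤ s * a + c * b := by
      nlinarith [mul_nonneg (sub_nonneg.2 hsc) (sub_nonneg.2 hba)]
    have hord2 : (c * a + s * b) ^ 2 ≤ (s * a + c * b) ^ 2 :=
      pow_le_pow_left₀ (by positivity) hord 2
    have h1 : max (a ^ 2) (b ^ 2) = b ^ 2 := by
      exact max_eq_right (pow_le_pow_left₀ ha0 hba 2)
    rw [h1]
    have h2 : max (‖star vp ⬝ᵥ ψ‖ ^ 2) (‖star vm ⬝ᵥ ψ‖ ^ 2)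
        ≤ (s * a + c * b) ^ 2 := max_le (le_trans hAsq hord2) hBsq
    have hkey := key b a hb0 ha0 (by linarith) hba
    have hrw : (s * a + c * b) ^ 2 = (c * b + s * a) ^ 2 := by ring
    linarith
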